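/- A probability measure μ on K ⊆ ℝ^d with finite second moments is a probabilistic tight frame for ℝ^d if and only if its second moments satisfy m_{i,j}(μ) = (δ_{i,j}/d)·∫_K ‖x‖² dμ(x) for all i, j = 1, …, d, where m_{i,j}(μ) = ∫_K x^(i) x^(j) dμ(x). -/

import Mathlib

open MeasureTheory RealInnerProductSpace

/-- A probability measure with finite second moments (and not supported on `{0}`) is a
probabilistic tight frame if and only if its second moments satisfy
`m_{i,j}(μ) = (δ_{i,j}/d) ∫ ‖x‖² dμ(x)`. -/
theorem stmt_3 {d : ℕ} (K : Set (EuclideanSpace ℝ (Fin d)))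
    (μ : Measure (EuclideanSpace ℝ (Fin d))) [IsProbabilityMeasure μ]
    (hμK : μ Kᶜ = 0) (hint : Integrable (fun y => ‖y‖ ^ 2) μ)
    (hpos : 0 < ∫ x, ‖x‖ ^ 2 ∂μ) :
    (∃ A : ℝ, 0 < A ∧ ∀ x : EuclideanSpace ℝ (Fin d),
        (∫ y, ⟪x, y⟫ ^ 2 ∂μ) = A * ‖x‖ ^ 2) ↔
      ∀ i j : Fin d,
        (∫ x, x i * x j ∂μ) = (if i = j then (1 : ℝ) / d else 0) * ∫ x, ‖x‖ ^ 2 ∂μ := by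
  -- d is positive
  have hd : 0 < d := by
    rcases Nat.eq_zero_or_pos d with h0 | h; swap; · exact h
    subst h0
    have h0 : ∀ x : EuclideanSpace ℝ (Fin 0), ‖x‖ ^ 2 = 0 := fun x => by
      simp [Subsingleton.elim x 0]
    simp only [h0, integral_zero] at hpos
    exact absurd hpos (lt_irrefl 0)
  have hnormsq : ∀ y : EuclideanSpace ℝ (Fin d), ‖y‖ ^ 2 = ∑ i, (y i) ^ 2 := fun y => by
    rw [← real_inner_self_eq_norm_sq, PiLp.inner_apply]
    simp [RCLike.inner_apply, pow_two]
  have habs : ∀ (y : EuclideanSpace ℝ (Fin d)) (i : Fin d), |y i| ≤ ‖y‖ := fun y i => by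
    have h1 : (y i) ^ 2 ≤ ‖y‖ ^ 2 := by
      rw [hnormsq]
      exact Finset.single_le_sum (f := fun k => (y k) ^ 2) (fun k _ => sq_nonneg _)
        (Finset.mem_univ i)
    calc |y i| = Real.sqrt ((y i) ^ 2) := (Real.sqrt_sq_eq_abs _).symm
    _ ≤ Real.sqrt (‖y‖ ^ 2) := Real.sqrt_le_sqrt h1
    _ = ‖y‖ := Real.sqrt_sq (norm_nonneg _)
  have hmul : ∀ i j : Fin d, Integrable (fun y : EuclideanSpace ℝ (Fin d) => y i * y j) μ := by
    intro i j
    refine hint.mono ?_ ?_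
    · exact (((EuclideanSpace.proj (𝕜 := ℝ) i).continuous).mul
        ((EuclideanSpace.proj (𝕜 := ℝ) j).continuous)).aestronglyMeasurable
    · filter_upwards with y
      rw [Real.norm_eq_abs, Real.norm_eq_abs, abs_mul,
        abs_of_nonneg (by positivity : (0:ℝ) ≤ ‖y‖ ^ 2), pow_two]
      exact mul_le_mul (habs y i) (habs y j) (abs_nonneg _) (norm_nonneg _)
  have hsq : ∀ i : Fin d, Integrable (fun y : EuclideanSpace ℝ (Fin d) => (y i) ^ 2) μ :=
    fun i => by simpa only [pow_two] using hmul i i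
  constructor
  · rintro ⟨A, hA, h⟩
    -- diagonal moments
    have hdiag : ∀ i : Fin d, (∫ y, (y i) ^ 2 ∂μ) = A := fun i => by
      have hx := h (EuclideanSpace.single i 1)
      simpa [EuclideanSpace.inner_single_left, EuclideanSpace.norm_single] using hx
    -- off-diagonal moments vanish
    have hcross : ∀ i j : Fin d, i ≠ j → (∫ y, y i * y j ∂μ) = 0 := by
      intro i j hij
      have hx := h (EuclideanSpace.single i 1 + EuclideanSpace.single j 1)
      have hnorm : ‖EuclideanSpace.single i (1:ℝ) + EuclideanSpace.single j 1‖ ^ 2 = 2 := by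
        rw [← real_inner_self_eq_norm_sq, inner_add_left, inner_add_right, inner_add_right]
        simp [inner_add_left, inner_add_right, EuclideanSpace.inner_single_left,
          EuclideanSpace.single_apply, hij, Ne.symm hij]
        norm_num
      rw [hnorm] at hx
      have hexpand : (∫ y, ⟪EuclideanSpace.single i (1:ℝ) + EuclideanSpace.single j 1, y⟫ ^ 2 ∂μ)
          = (∫ y, (y i) ^ 2 ∂μ) + 2 * (∫ y, y i * y j ∂μ) + (∫ y, (y j) ^ 2 ∂μ) := by
        have h1 : (∫ y, ⟪EuclideanSpace.single i (1:ℝ) + EuclideanSpace.single j 1, y⟫ ^ 2 ∂μ)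
            = ∫ y, ((y i) ^ 2 + 2 * (y i * y j) + (y j) ^ 2) ∂μ := by
          refine integral_congr_ae (Filter.Eventually.of_forall fun y => ?_)
          simp [inner_add_left, EuclideanSpace.inner_single_left]
          ring
        have hI : Integrable (fun y : EuclideanSpace ℝ (Fin d) =>
            (y i) ^ 2 + 2 * (y i * y j)) μ := (hsq i).add ((hmul i j).const_mul 2)
        rw [h1, integral_add hI (hsq j), integral_add (hsq i) ((hmul i j).const_mul 2),
          integral_const_mul]
      rw [hexpand, hdiag i, hdiag j] at hx
      linarith
    -- total: ∫‖x‖² = d * A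
    have hsum : (∫ x, ‖x‖ ^ 2 ∂μ) = d * A := by
      have h1 : (∫ x, ‖x‖ ^ 2 ∂μ) = ∫ x, (∑ i, (x i) ^ 2) ∂μ :=
        integral_congr_ae (Filter.Eventually.of_forall fun y => hnormsq y)
      rw [h1, integral_finset_sum _ fun i _ => hsq i]
      simp [hdiag]
    intro i j
    by_cases hij : i = j
    · subst hij
      have : (∫ x, x i * x i ∂μ) = A := by
        rw [← hdiag i]
        exact integral_congr_ae (Filter.Eventually.of_forall fun y => (pow_two _).symm)
      rw [this, hsum, if_pos rfl]
      field_simp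
    · rw [hcross i j hij, if_neg hij, zero_mul]
  · intro h
    set M := ∫ x, ‖x‖ ^ 2 ∂μ with hM
    refine ⟨M / d, div_pos hpos (by exact_mod_cast hd), fun x => ?_⟩
    have h1 : (∫ y, ⟪x, y⟫ ^ 2 ∂μ)
        = ∫ y, (∑ i, ∑ j, (x i * x j) * (y i * y j)) ∂μ := by
      refine integral_congr_ae (Filter.Eventually.of_forall fun y => ?_)
      simp only [PiLp.inner_apply, RCLike.inner_apply, conj_trivial]
      rw [pow_two, Finset.sum_mul_sum]
      exact Finset.sum_congr rfl fun i _ => Finset.sum_congr rfl fun j _ => by ring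
    rw [h1, integral_finset_sum _ fun i _ =>
      integrable_finset_sum _ fun j _ => (hmul i j).const_mul _]
    have h2 : ∀ i : Fin d, (∫ y, (∑ j, (x i * x j) * (y i * y j)) ∂μ)
        = ∑ j, (x i * x j) * ∫ y, y i * y j ∂μ := fun i => by
      rw [integral_finset_sum _ fun j _ => (hmul i j).const_mul _]
      exact Finset.sum_congr rfl fun j _ => integral_const_mul _ _
    simp only [h2, h]
    have h3 : ∀ i : Fin d,
        (∑ j, x i * x j * ((if i = j then (1:ℝ) / d else 0) * M)) = x i * x i * (1 / d * M) := by
      intro i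
      rw [Finset.sum_eq_single i]
      · simp
      · intro j _ hji
        rw [if_neg (Ne.symm hji), zero_mul, mul_zero]
      · intro hi; exact absurd (Finset.mem_univ i) hi
    simp only [h3]
    rw [← Finset.sum_mul, hnormsq x]
    have : (∑ i, x i * x i) = ∑ i, (x i) ^ 2 :=
      Finset.sum_congr rfl fun i _ => (pow_two _).symm
    rw [this]
    ring
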